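/- Let θ ∈ [0,1]^n be thresholds each of which is an integer multiple of ε/2, and let D = D_1×…×D_n be any product distribution on [0,1]^n. Let t_{ε/2} denote the vector obtained from t by rounding each coordinate down to the nearest multiple of ε/2, and let D_{ε/2} denote the corresponding pushforward (discretized) product distribution. Then the expected reward of the threshold strategy satisfies E_{t∼D}[h_θ(t_{ε/2})] ≤ E_{t∼D}[h_θ(t)]; equivalently, h_θ(D_{ε/2}) ≤ h_θ(D). -/
import Mathlib


open MeasureTheory ProbabilityTheory
open scoped NNReal ENNReal

/-- Expected value `h(D) = E_{t∼D}[h(t)]` of a hypothesis under the product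
distribution with marginals `μ i`. -/
noncomputable def expVal {n : ℕ} (h : (Fin n → ℝ) → ℝ) (μ : Fin n → Measure ℝ) : ℝ :=
  ∫ t, h t ∂(Measure.pi μ)

/-- A distribution on `ℝ` supported on `[0,1]`. -/
def SuppIn01 (μ : Measure ℝ) : Prop := μ (Set.Icc (0 : ℝ) 1)ᶜ = 0

/-- `Opt(D) = sup_{h ∈ H} h(D)`. -/
noncomputable def Opt {n : ℕ} (H : Set ((Fin n → ℝ) → ℝ)) (μ : Fin n → Measure ℝ) : ℝ :=
  ⨆ h : H, expVal (h : (Fin n → ℝ) → ℝ) μ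

/-- Coordinatewise first-order stochastic dominance `P ⪰ Q`:
`F_{P_i}(t) ≤ F_{Q_i}(t)` for every `i` and `t`. -/
def StochDom {n : ℕ} (P Q : Fin n → Measure ℝ) : Prop :=
  ∀ (i : Fin n) (t : ℝ), cdf (P i) t ≤ cdf (Q i) t

/-- Strong monotonicity of a problem `H`: for every product distribution `D̃`
(on `[0,1]ⁿ`) there is an optimal hypothesis `h_{D̃}` whose expected value on any
product distribution `D ⪰ D̃` is at least `Opt(D̃)`. -/
def StronglyMonotone {n : ℕ} (H : Set ((Fin n → ℝ) → ℝ)) : Prop :=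
  ∀ Dt : Fin n → Measure ℝ, (∀ i, IsProbabilityMeasure (Dt i)) → (∀ i, SuppIn01 (Dt i)) →
    ∃ h ∈ H, expVal h Dt = Opt H Dt ∧
      ∀ D : Fin n → Measure ℝ, (∀ i, IsProbabilityMeasure (D i)) → (∀ i, SuppIn01 (D i)) →
        StochDom D Dt → Opt H Dt ≤ expVal h D

/-- The marginal empirical measure: the uniform distribution over the `i`-th
coordinates of the samples `s`. -/
noncomputable def empMeas {N n : ℕ} (s : Fin N → Fin n → ℝ) (i : Fin n) : Measure ℝ :=
  ((N : ℝ≥0)⁻¹ : ℝ≥0) • ∑ m : Fin N, Measure.dirac (s m i)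

/-- Expectation of `h` under the *product empirical distribution* `E = E_1 × ⋯ × E_n`
determined by the samples `s` (written directly as a finite average over all
combinations of sample coordinates). -/
noncomputable def empExp {N n : ℕ} (s : Fin N → Fin n → ℝ) (h : (Fin n → ℝ) → ℝ) : ℝ :=
  (∑ m : Fin n → Fin N, h fun i => s (m i) i) / (N ^ n : ℕ)

/-- `Opt(E)` for the product empirical distribution of the samples `s`. -/
noncomputable def empOpt {N n : ℕ} (H : Set ((Fin n → ℝ) → ℝ)) (s : Fin N → Fin n → ℝ) : ℝ :=
  ⨆ h : H, empExp s (h : (Fin n → ℝ) → ℝ)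

/-- The empirical CDF `F_{E_i}(t) = #{m : s_i^{(m)} ≤ t} / N`. -/
noncomputable def empCdf {N n : ℕ} (s : Fin N → Fin n → ℝ) (i : Fin n) (t : ℝ) : ℝ :=
  ((Finset.univ.filter fun m : Fin N => s m i ≤ t).card : ℝ) / N

/-- Total variation distance between two measures. -/
noncomputable def tvDist {α : Type*} [MeasurableSpace α] (P Q : Measure α) : ℝ :=
  ⨆ A : {A : Set α // MeasurableSet A}, ((P A).toReal - (Q A).toReal)

/-- Squared Hellinger distance `H²(P,Q) = 1 − ∫ √(dP/dλ · dQ/dλ) dλ` (`λ = P + Q`). -/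
noncomputable def sqHellinger {α : Type*} [MeasurableSpace α] (P Q : Measure α) : ℝ :=
  1 - ∫ x, Real.sqrt ((P.rnDeriv (P + Q) x).toReal * (Q.rnDeriv (P + Q) x).toReal) ∂(P + Q)

/-- The measure of i.i.d. samples: `N` independent draws from the product
distribution with marginals `μ`. -/
noncomputable def samples (N : ℕ) {n : ℕ} (μ : Fin n → Measure ℝ) :
    Measure (Fin N → Fin n → ℝ) :=
  Measure.pi fun _ : Fin N => Measure.pi μ

/-- The reward of the threshold strategy `θ` on realization `t`, starting from
position `j`: it accepts the first reward `t i ≥ θ i` among positions `i < n−1`,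
and accepts the last reward if it reaches it. -/
noncomputable def prophetAux {n : ℕ} (θ t : Fin n → ℝ) : ℕ → ℝ
  | j =>
    if h : j < n then
      if j = n - 1 then t ⟨j, h⟩
      else if θ ⟨j, h⟩ ≤ t ⟨j, h⟩ then t ⟨j, h⟩
      else prophetAux θ t (j + 1)
    else 0
  termination_by j => n - j
  decreasing_by omega

/-- The reward `h_θ(t)` of the threshold strategy `θ` on realization `t`. -/
noncomputable def prophetReward {n : ℕ} (θ t : Fin n → ℝ) : ℝ := prophetAux θ t 0

/-- The optimal (backward-induction) value of the prophet game on the suffix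
`μ_j × ⋯ × μ_{n−1}`: `V j = E_{x ∼ μ_j}[max(x, V (j+1))]`, `V n = 0`. -/
noncomputable def suffixValue {n : ℕ} (μ : Fin n → Measure ℝ) : ℕ → ℝ
  | j =>
    if h : j < n then ∫ x, max x (suffixValue μ (j + 1)) ∂(μ ⟨j, h⟩)
    else 0
  termination_by j => n - j
  decreasing_by omega

/-- The backward-induction optimal thresholds for the product distribution `μ`:
`θ_{n−1} = 0` and `θ_i` is the optimal expected reward on the suffix after `i`. -/
noncomputable def optThresholds {n : ℕ} (μ : Fin n → Measure ℝ) : Fin n → ℝ :=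
  fun i => if (i : ℕ) = n - 1 then 0 else suffixValue μ ((i : ℕ) + 1)

/-- A nonanticipating stopping rule: its decision depends only on the rewards
observed up to the stopping time. -/
def Nonanticipating {n : ℕ} (τ : (Fin n → ℝ) → Fin n) : Prop :=
  ∀ t t' : Fin n → ℝ, (∀ j : Fin n, j ≤ τ t → t j = t' j) → τ t' = τ t

/-- The optimal expected reward over all (adaptive, nonanticipating) stopping
strategies for the product distribution `μ`. -/
noncomputable def optStopValue {n : ℕ} (μ : Fin n → Measure ℝ) : ℝ :=
  ⨆ τ : {τ : (Fin n → ℝ) → Fin n // Nonanticipating τ},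
    ∫ t, t ((τ : (Fin n → ℝ) → Fin n) t) ∂(Measure.pi μ)

/-- Rounding down to the nearest multiple of `ε/2`. -/
noncomputable def rnd (ε x : ℝ) : ℝ := ⌊x / (ε / 2)⌋ * (ε / 2)

section Aux

lemma rnd_le (ε x : ℝ) (hε : 0 < ε) : rnd ε x ≤ x := by
  have hc : (0:ℝ) < ε / 2 := by linarith
  have := Int.floor_le (x / (ε / 2))
  calc (⌊x / (ε / 2)⌋ : ℝ) * (ε / 2) ≤ (x / (ε / 2)) * (ε / 2) := by
        exact mul_le_mul_of_nonneg_right this hc.le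
    _ = x := by field_simp

lemma rnd_nonneg (ε x : ℝ) (hε : 0 < ε) (hx : 0 ≤ x) : 0 ≤ rnd ε x := by
  have hc : (0:ℝ) < ε / 2 := by linarith
  have h0 : (0:ℤ) ≤ ⌊x / (ε / 2)⌋ := Int.floor_nonneg.2 (div_nonneg hx hc.le)
  have : (0:ℝ) ≤ (⌊x / (ε / 2)⌋ : ℝ) := by exact_mod_cast h0
  exact mul_nonneg this hc.le

lemma le_rnd_of_mult (ε x θi : ℝ) (hε : 0 < ε) (z : ℤ) (hz : θi = z * (ε / 2))
    (h : θi ≤ x) : θi ≤ rnd ε x := by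
  have hc : (0:ℝ) < ε / 2 := by linarith
  have hz' : (z : ℝ) ≤ x / (ε / 2) := by
    rw [le_div_iff₀ hc]; linarith [hz ▸ h]
  have : (z : ℝ) ≤ (⌊x / (ε / 2)⌋ : ℝ) := by exact_mod_cast Int.le_floor.2 hz'
  rw [hz]
  exact mul_le_mul_of_nonneg_right this hc.le

lemma prophetAux_meas {n : ℕ} (θ : Fin n → ℝ) :
    ∀ j, Measurable fun t : Fin n → ℝ => prophetAux θ t j := by
  intro j
  induction' hk : n - j with k ih generalizing j
  · rw [show (fun t : Fin n → ℝ => prophetAux θ t j) = fun _ => 0 from ?_]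
    · exact measurable_const
    · funext t; rw [prophetAux]; rw [dif_neg (by omega)]
  · have hj : j < n := by omega
    have heq : (fun t : Fin n → ℝ => prophetAux θ t j) =
        fun t => if j = n - 1 then t ⟨j, hj⟩
          else if θ ⟨j, hj⟩ ≤ t ⟨j, hj⟩ then t ⟨j, hj⟩ else prophetAux θ t (j+1) := by
      funext t; rw [prophetAux]; rw [dif_pos hj]
    rw [heq]
    by_cases hlast : j = n - 1
    · simp only [if_pos hlast]; exact measurable_pi_apply _
    · simp only [if_neg hlast]
      have hih : Measurable fun t : Fin n → ℝ => prophetAux θ t (j+1) := ih (j+1) (by omega)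
      exact Measurable.ite
        (measurableSet_le measurable_const (measurable_pi_apply _))
        (measurable_pi_apply _) hih

lemma prophetAux_mem {n : ℕ} (θ : Fin n → ℝ) (t : Fin n → ℝ)
    (ht : ∀ i, t i ∈ Set.Icc (0:ℝ) 1) :
    ∀ j, prophetAux θ t j ∈ Set.Icc (0:ℝ) 1 := by
  intro j
  induction' hk : n - j with k ih generalizing j
  · rw [prophetAux, dif_neg (by omega)]; constructor <;> norm_num
  · have hj : j < n := by omega
    rw [prophetAux, dif_pos hj]
    by_cases hlast : j = n - 1
    · simp only [if_pos hlast]; exact ht _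
    · simp only [if_neg hlast]
      by_cases hacc : θ ⟨j, hj⟩ ≤ t ⟨j, hj⟩
      · simp only [if_pos hacc]; exact ht _
      · simp only [if_neg hacc]; exact ih (j+1) (by omega)

lemma prophetAux_rnd_le {n : ℕ} (ε : ℝ) (hε : 0 < ε) (θ t : Fin n → ℝ)
    (hθmult : ∀ i, ∃ z : ℤ, θ i = z * (ε / 2)) :
    ∀ j, prophetAux θ (fun i => rnd ε (t i)) j ≤ prophetAux θ t j := by
  intro j
  induction' hk : n - j with k ih generalizing j
  · conv_lhs => rw [prophetAux]
    conv_rhs => rw [prophetAux]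
    rw [dif_neg (show ¬ j < n by omega), dif_neg (show ¬ j < n by omega)]
  · have hj : j < n := by omega
    conv_lhs => rw [prophetAux]
    conv_rhs => rw [prophetAux]
    rw [dif_pos hj, dif_pos hj]
    by_cases hlast : j = n - 1
    · simp only [if_pos hlast]; exact rnd_le ε _ hε
    · simp only [if_neg hlast]
      by_cases hacc : θ ⟨j, hj⟩ ≤ t ⟨j, hj⟩
      · obtain ⟨z, hz⟩ := hθmult ⟨j, hj⟩
        have hacc' : θ ⟨j, hj⟩ ≤ rnd ε (t ⟨j, hj⟩) := le_rnd_of_mult ε _ _ hε z hz hacc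
        simp only [if_pos hacc, if_pos hacc']
        exact rnd_le ε _ hε
      · have hacc' : ¬ θ ⟨j, hj⟩ ≤ rnd ε (t ⟨j, hj⟩) := fun h =>
          hacc (h.trans (rnd_le ε _ hε))
        simp only [if_neg hacc, if_neg hacc']
        exact ih (j+1) (by omega)

end Aux

/-!
STATEMENT 14: discretization monotonicity: if every threshold `θ i ∈ [0,1]` is a
multiple of `ε/2`, then running the threshold strategy on the rounded-down
rewards earns at most as much in expectation as running it on the true rewards:
`h_θ(D_{ε/2}) ≤ h_θ(D)`. -/
theorem stmt14 (n : ℕ) (ε : ℝ) (hε : ε ∈ Set.Ioo (0 : ℝ) 1)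
    (θ : Fin n → ℝ) (hθ01 : ∀ i, θ i ∈ Set.Icc (0 : ℝ) 1)
    (hθmult : ∀ i, ∃ z : ℤ, θ i = z * (ε / 2))
    (D : Fin n → Measure ℝ) [∀ i, IsProbabilityMeasure (D i)]
    (hD : ∀ i, SuppIn01 (D i)) :
    ∫ t, prophetReward θ (fun i => rnd ε (t i)) ∂(Measure.pi D)
      ≤ ∫ t, prophetReward θ t ∂(Measure.pi D) := by
  have hε0 : 0 < ε := hε.1
  have hrndm : Measurable fun x : ℝ => rnd ε x := by
    unfold rnd
    have h1 : Measurable fun x : ℝ => (⌊x / (ε/2)⌋ : ℝ) :=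
      measurable_from_top.comp (measurable_id.div_const _).floor
    exact h1.mul_const _
  have hmapm : Measurable fun t : Fin n → ℝ => (fun i => rnd ε (t i)) :=
    measurable_pi_lambda _ fun i => hrndm.comp (measurable_pi_apply i)
  have hmg : Measurable fun t : Fin n → ℝ => prophetReward θ t := prophetAux_meas θ 0
  have hmf : Measurable fun t : Fin n → ℝ => prophetReward θ (fun i => rnd ε (t i)) :=
    (prophetAux_meas θ 0).comp hmapm
  have hae : ∀ᵐ t ∂(Measure.pi D), ∀ i, t i ∈ Set.Icc (0:ℝ) 1 := by
    rw [MeasureTheory.ae_all_iff]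
    intro i
    rw [MeasureTheory.ae_iff]
    have : {t : Fin n → ℝ | ¬ t i ∈ Set.Icc (0:ℝ) 1}
        = Function.eval i ⁻¹' (Set.Icc (0:ℝ) 1)ᶜ := rfl
    rw [this]
    exact Measure.pi_eval_preimage_null D (hD i)
  have hbg : ∀ᵐ t ∂(Measure.pi D), ‖prophetReward θ t‖ ≤ 1 := by
    filter_upwards [hae] with t ht
    have := prophetAux_mem θ t ht 0
    rw [prophetReward, Real.norm_eq_abs, abs_le]
    exact ⟨by linarith [this.1], this.2⟩
  have hbf : ∀ᵐ t ∂(Measure.pi D), ‖prophetReward θ (fun i => rnd ε (t i))‖ ≤ 1 := by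
    filter_upwards [hae] with t ht
    have hmem : ∀ i, rnd ε (t i) ∈ Set.Icc (0:ℝ) 1 := fun i =>
      ⟨rnd_nonneg ε _ hε0 (ht i).1, (rnd_le ε _ hε0).trans (ht i).2⟩
    have := prophetAux_mem θ (fun i => rnd ε (t i)) hmem 0
    rw [prophetReward, Real.norm_eq_abs, abs_le]
    exact ⟨by linarith [this.1], this.2⟩
  have hig : Integrable (fun t => prophetReward θ t) (Measure.pi D) :=
    (integrable_const (1:ℝ)).mono' hmg.aestronglyMeasurable hbg
  have hif : Integrable (fun t => prophetReward θ (fun i => rnd ε (t i))) (Measure.pi D) :=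
    (integrable_const (1:ℝ)).mono' hmf.aestronglyMeasurable hbf
  exact integral_mono hif hig fun t => prophetAux_rnd_le ε hε0 θ t hθmult 0
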